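/- arXiv:2203.12903 — 2 statements merged into one kernel-verified Lean document; each statement's English description precedes it below -/
import Mathlib

section
/- Let G be a finite set of LTL formulas with |G| > 2 and Dom a domain formula. If φ satisfies the logical-inconsistency condition (Dom ∧ ⋀G ∧ φ unsatisfiable) and the minimality condition (Dom ∧ ⋀(G\{g}) ∧ φ satisfiable for every g ∈ G) with respect to G under Dom, then there exists a two-element subset G' ⊆ G such that φ satisfies the logical-inconsistency and minimality conditions with respect to G' under the extended domain Dom ∧ ⋀(G \ G'). -/
open Classical

abbrev Trace (AP : Type*) := ℕ → Set AP
abbrev LTLFormula (AP : Type*) := Trace AP → Prop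
def Satisfiable {AP : Type*} (φ : LTLFormula AP) : Prop := ∃ σ, φ σ

/-- BC reduction: if φ satisfies logical inconsistency and
minimality for a goal set G with |G| > 2 under Dom, then there is a
two-element subset G' ⊆ G such that φ satisfies both conditions for G'
under the extended domain Dom ∧ ⋀(G \ G'). -/
theorem stmt4 {AP : Type*} (G : Finset (LTLFormula AP))
    (hG : G.card > 2) (Dom φ : LTLFormula AP)
    (hunsat : ¬ Satisfiable (fun σ => Dom σ ∧ (∀ g ∈ G, g σ) ∧ φ σ))
    (hmin : ∀ g ∈ G,
      Satisfiable (fun σ => Dom σ ∧ (∀ g' ∈ G.erase g, g' σ) ∧ φ σ)) :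
    ∃ G' ⊆ G, G'.card = 2 ∧
      (¬ Satisfiable (fun σ =>
          (Dom σ ∧ ∀ g ∈ G \ G', g σ) ∧ (∀ g ∈ G', g σ) ∧ φ σ)) ∧
      (∀ g ∈ G', Satisfiable (fun σ =>
          (Dom σ ∧ ∀ g' ∈ G \ G', g' σ) ∧ (∀ g' ∈ G'.erase g, g' σ) ∧ φ σ)) := by
  obtain ⟨a, ha, b, hb, hab⟩ := Finset.one_lt_card.mp (show 1 < G.card by omega)
  refine ⟨{a, b}, ?_, ?_, ?_, ?_⟩
  · intro x hx
    simp only [Finset.mem_insert, Finset.mem_singleton] at hx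
    rcases hx with rfl | rfl <;> assumption
  · rw [Finset.card_insert_of_notMem (by simpa using hab), Finset.card_singleton]
  · intro ⟨σ, ⟨hD, hrest⟩, hpair, hφ⟩
    apply hunsat
    refine ⟨σ, hD, ?_, hφ⟩
    intro g hg
    by_cases hg' : g ∈ ({a, b} : Finset (LTLFormula AP))
    · exact hpair g hg'
    · exact hrest g (Finset.mem_sdiff.mpr ⟨hg, hg'⟩)
  · intro g hg
    simp only [Finset.mem_insert, Finset.mem_singleton] at hg
    rcases hg with rfl | rfl
    · obtain ⟨σ, hD, hall, hφ⟩ := hmin g ha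
      refine ⟨σ, ⟨hD, ?_⟩, ?_, hφ⟩
      · intro g' hg'
        rw [Finset.mem_sdiff] at hg'
        exact hall g' (Finset.mem_erase.mpr ⟨fun h => hg'.2 (by simp [h]), hg'.1⟩)
      · intro g' hg'
        rw [Finset.mem_erase] at hg'
        have : g' = b := by
          rcases Finset.mem_insert.mp hg'.2 with h | h
          · exact absurd h hg'.1
          · simpa using h
        subst this
        exact hall g' (Finset.mem_erase.mpr ⟨hab.symm, hb⟩)
    · obtain ⟨σ, hD, hall, hφ⟩ := hmin g hb
      refine ⟨σ, ⟨hD, ?_⟩, ?_, hφ⟩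
      · intro g' hg'
        rw [Finset.mem_sdiff] at hg'
        exact hall g' (Finset.mem_erase.mpr ⟨fun h => hg'.2 (by simp [h]), hg'.1⟩)
      · intro g' hg'
        rw [Finset.mem_erase] at hg'
        have : g' = a := by
          rcases Finset.mem_insert.mp hg'.2 with h | h
          · exact h
          · exact absurd (by simpa using h) hg'.1
        subst this
        exact hall g' (Finset.mem_erase.mpr ⟨hab, ha⟩)
end

section
/- Two trace formulas φ1, φ2 of the same length n admit a synthesis if and only if: each pairwise conjunction p_i¹ ∧ p_i² is satisfiable for all positions i except exactly one position j at which p_j¹ and p_j² differ in exactly one complementary literal and fuse(p_j¹, p_j²) is satisfiable. In this case the synthesis, when it exists, is unique up to semantic equivalence at each position. -/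
/-- A conjunction of literals, each literal being an atom with a polarity. -/
abbrev LitConj (AP : Type*) := List (AP × Bool)

/-- A state `s` satisfies a conjunction of literals `c`. -/
def SatConj {AP : Type*} (c : LitConj AP) (s : Set AP) : Prop :=
  ∀ l ∈ c, (l.1 ∈ s ↔ l.2 = true)

/-- Satisfaction of the trace formula
`⋀_{0 ≤ i ≤ n} X^i (p i) ∧ X^{n+1} G (p (n+1))` by a trace `σ`. -/
def TSat {AP : Type*} (n : ℕ) (p : ℕ → LitConj AP) (σ : Trace AP) : Prop :=
  (∀ i ≤ n, SatConj (p i) (σ i)) ∧ ∀ k ≥ n + 1, SatConj (p (n + 1)) (σ k)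

/-- `fuse (p1 ∧ a) (p2 ∧ ¬a) = p1 ∧ p2`: drop the complementary literals over `a`. -/
def fuse {AP : Type*} [DecidableEq AP] (c1 c2 : LitConj AP) (a : AP) : LitConj AP :=
  c1.filter (fun l => decide (l.1 ≠ a)) ++ c2.filter (fun l => decide (l.1 ≠ a))

/-- `c1` and `c2` differ in exactly one complementary literal, over the atom `a`:
`c1` contains `a`, `c2` contains `¬a`, and they agree on all other literals. -/
def DiffOne {AP : Type*} (c1 c2 : LitConj AP) (a : AP) : Prop :=
  (a, true) ∈ c1 ∧ (a, false) ∈ c2 ∧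
    ∀ l : AP × Bool, l.1 ≠ a → (l ∈ c1 ↔ l ∈ c2)

/-- `p` is a synthesis of the trace formulas (of length `n`) given by `p1` and `p2`:
at exactly one position `j` the two differ in one complementary literal and are fused,
at all other positions they are conjoined, and every resulting position is satisfiable. -/
def IsSynthesis {AP : Type*} [DecidableEq AP]
    (n : ℕ) (p1 p2 p : ℕ → LitConj AP) : Prop :=
  ∃ j ≤ n + 1, ∃ a : AP,
    DiffOne (p1 j) (p2 j) a ∧ p j = fuse (p1 j) (p2 j) a ∧
    (∀ i ≤ n + 1, i ≠ j → p i = p1 i ++ p2 i) ∧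
    (∀ i ≤ n + 1, ∃ s : Set AP, SatConj (p i) s)

/-- two trace formulas of the same length n (with no repeated
atoms at each position) admit a synthesis iff the positionwise conjunctions
p_i¹ ∧ p_i² are satisfiable at all positions except exactly one position j,
at which the two differ in exactly one complementary literal and the fused
conjunction is satisfiable; moreover the synthesis is unique up to semantic
equivalence at each position. -/
theorem stmt17 {AP : Type*} [DecidableEq AP]
    (n : ℕ) (p1 p2 : ℕ → LitConj AP)
    (hnodup1 : ∀ i ≤ n + 1, ((p1 i).map Prod.fst).Nodup)
    (hnodup2 : ∀ i ≤ n + 1, ((p2 i).map Prod.fst).Nodup) :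
    ((∃ p : ℕ → LitConj AP, IsSynthesis n p1 p2 p) ↔
      ∃ j ≤ n + 1,
        (∃ a : AP, DiffOne (p1 j) (p2 j) a ∧
          ∃ s : Set AP, SatConj (fuse (p1 j) (p2 j) a) s) ∧
        ∀ i ≤ n + 1, i ≠ j → ∃ s : Set AP, SatConj (p1 i ++ p2 i) s) ∧
    (∀ p p' : ℕ → LitConj AP,
      IsSynthesis n p1 p2 p → IsSynthesis n p1 p2 p' →
      ∀ i ≤ n + 1, ∀ s : Set AP, SatConj (p i) s ↔ SatConj (p' i) s) := by
  have key : ∀ j ≤ n + 1, ∀ a, DiffOne (p1 j) (p2 j) a →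
      ∀ s : Set AP, ¬ SatConj (p1 j ++ p2 j) s := by
    intro j hj a hd s hs
    have h1 := hs (a, true) (List.mem_append_left _ hd.1)
    have h2 := hs (a, false) (List.mem_append_right _ hd.2.1)
    simp at h1 h2
    exact h2 h1
  constructor
  · constructor
    · rintro ⟨p, j, hj, a, hdiff, hpj, hpi, hsat⟩
      refine ⟨j, hj, ⟨a, hdiff, ?_⟩, ?_⟩
      · obtain ⟨s, hs⟩ := hsat j hj
        exact ⟨s, hpj ▸ hs⟩
      · intro i hi hij
        obtain ⟨s, hs⟩ := hsat i hi
        exact ⟨s, (hpi i hi hij) ▸ hs⟩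
    · rintro ⟨j, hj, ⟨a, hdiff, s, hs⟩, hsat⟩
      refine ⟨fun i => if i = j then fuse (p1 j) (p2 j) a else p1 i ++ p2 i,
        j, hj, a, hdiff, by simp, fun i hi hij => by simp [hij], ?_⟩
      intro i hi
      by_cases h : i = j
      · subst h; exact ⟨s, by simpa using hs⟩
      · obtain ⟨t, ht⟩ := hsat i hi h
        exact ⟨t, by simpa [h] using ht⟩
  · rintro p p' ⟨j, hj, a, hd, hpj, hpi, hsat⟩ ⟨j', hj', a', hd', hpj', hpi', hsat'⟩ i hi s
    have hjj : j = j' := by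
      by_contra hne
      obtain ⟨t, ht⟩ := hsat j' hj'
      rw [hpi j' hj' (Ne.symm hne)] at ht
      exact key j' hj' a' hd' t ht
    subst hjj
    have haa : a = a' := by
      by_contra hne
      have h1 : (a', true) ∈ p2 j := (hd.2.2 (a', true) (by simpa using Ne.symm hne)).mp hd'.1
      have h2 : (a', false) ∈ p2 j := hd'.2.1
      have := List.inj_on_of_nodup_map (hnodup2 j hj) h1 h2 rfl
      simp at this
    subst haa
    have hip : p i = p' i := by
      by_cases h : i = j
      · subst h; rw [hpj, hpj']
      · rw [hpi i hi h, hpi' i hi h]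
    rw [hip]
end
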